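/- Let f, h, q, w be real numbers and set D := h + w + f + h·q + q·w + f·w, assumed nonzero. Define the row vector π := (1/D)·(h + w, f, q·h + q·w + f·w) in ℝ³ and the 3×3 real matrix P with rows (1 − f − q, f, q), (h, 1 − h − w, w), and (1, 0, 0). Then π is a left fixed vector of P, i.e. the vector-matrix product π ᵥ* P equals π, and the entries of π sum to 1. -/

import Mathlib

open Matrix

theorem stmt_5 (f h q w : ℝ) (hD : h + w + f + h * q + q * w + f * w ≠ 0) :
    let D : ℝ := h + w + f + h * q + q * w + f * w
    let π : Fin 3 → ℝ := (1 / D) • ![h + w, f, q * h + q * w + f * w]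
    let P : Matrix (Fin 3) (Fin 3) ℝ :=
      !![1 - f - q, f, q; h, 1 - h - w, w; 1, 0, 0]
    π ᵥ* P = π ∧ ∑ i, π i = 1 := by
  intro D π P
  constructor
  · funext i
    fin_cases i <;>
      simp [π, P, vecMul, dotProduct, Fin.sum_univ_three, D] <;>
      field_simp <;> ring
  · simp [π, Fin.sum_univ_three, D]
    have hD' : h + w + f + h * q + w * q + w * f ≠ 0 := by intro h0; apply hD; linarith
    field_simp
    ring
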